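/- The inverse monoid AO_n is generated by the n specified rank-(n-1) order-preserving partial injections x_1, ..., x_n, and has rank exactly n (no generating set of size < n exists). -/

import Mathlib

/-- Partial transformations on `Fin n`, represented as `Option`-valued maps. -/
abbrev PT (n : ℕ) := Fin n → Option (Fin n)

/-- Left-to-right composition of partial maps: `x (pcomp f g) = (x f) g`. -/
def pcomp {n : ℕ} (f g : PT n) : PT n := fun x => (f x).bind g

/-- The identity partial map. -/
def pid (n : ℕ) : PT n := fun x => some x

instance PTMonoid (n : ℕ) : Monoid (PT n) where
  mul := pcomp
  one := pid n
  mul_assoc f g h := funext fun x => by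
    show ((f x).bind g).bind h = (f x).bind fun y => (g y).bind h
    cases f x <;> rfl
  one_mul f := rfl
  mul_one f := funext fun x => by
    show (f x).bind (fun y => some y) = f x
    cases f x <;> rfl

/-- `f` is injective on its domain. -/
def pInj {n : ℕ} (f : PT n) : Prop := ∀ x y a, f x = some a → f y = some a → x = y

/-- The domain of a partial map. -/
def pDom {n : ℕ} (f : PT n) : Finset (Fin n) := Finset.univ.filter fun x => (f x).isSome

/-- The image of a partial map. -/
def pIm {n : ℕ} (f : PT n) : Finset (Fin n) := Finset.univ.filter fun b => ∃ x, f x = some b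

/-- The rank of a partial map is the size of its domain. -/
def prank {n : ℕ} (f : PT n) : ℕ := (pDom f).card

/-- Order-preserving partial maps. -/
def orderPres {n : ℕ} (f : PT n) : Prop :=
  ∀ x y a b, f x = some a → f y = some b → x ≤ y → a ≤ b

/-- Order-reversing partial maps. -/
def orderRev {n : ℕ} (f : PT n) : Prop :=
  ∀ x y a b, f x = some a → f y = some b → x ≤ y → b ≤ a

/-- Monotone partial maps. -/
def isMonotonePT {n : ℕ} (f : PT n) : Prop := orderPres f ∨ orderRev f

/-- The permutation `σ` extends the partial map `f`. -/
def extendsTo {n : ℕ} (σ : Equiv.Perm (Fin n)) (f : PT n) : Prop :=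
  ∀ x a, f x = some a → σ x = a

/-- Membership in the alternating inverse monoid `AI_n`: an injective partial map of
rank `≤ n - 2`, or one that extends to an even permutation. -/
def inAI {n : ℕ} (f : PT n) : Prop :=
  pInj f ∧ (prank f + 2 ≤ n ∨
    ∃ σ : Equiv.Perm (Fin n), σ ∈ alternatingGroup (Fin n) ∧ extendsTo σ f)

/-- `AO_n = AI_n ∩ POI_n`. -/
def AO (n : ℕ) : Set (PT n) := {f | orderPres f ∧ inAI f}

/-- `AM_n = AI_n ∩ PMI_n`. -/
def AM (n : ℕ) : Set (PT n) := {f | isMonotonePT f ∧ inAI f}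

/-- Green's `J`-relation relative to a submonoid-like subset `S` (containing the identity):
`a J b` iff each lies in the two-sided principal ideal of the other. -/
def JRelIn {n : ℕ} (S : Set (PT n)) (a b : PT n) : Prop :=
  (∃ u v, u ∈ S ∧ v ∈ S ∧ a = u * b * v) ∧ (∃ u v, u ∈ S ∧ v ∈ S ∧ b = u * a * v)

/-- The (unique) order-preserving bijection from `Fin n \ {i}` onto `Fin n \ {j}`. -/
def opBij {n : ℕ} (i j : Fin n) : PT n := fun x =>
  if hx : x = i then none
  else if hlt : x.val < i.val then
    (if hp : x.val < j.val then some ⟨x.val, lt_trans hp j.isLt⟩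
     else some ⟨x.val + 1, by have := i.isLt; omega⟩)
  else
    (if hp : x.val - 1 < j.val then some ⟨x.val - 1, lt_trans hp j.isLt⟩
     else some ⟨x.val, x.isLt⟩)

/-- The generators `x_1, …, x_n` of `AO_n` (indexed 1-based by `i`):
`x_1 : X_1 → X_n` (`n` odd) or `X_1 → X_{n-1}` (`n` even); `x_2 : X_2 → X_{n-1}` (`n` odd)
or `X_2 → X_n` (`n` even); `x_i : X_i → X_{i-2}` for `3 ≤ i ≤ n`. -/
def xg (n : ℕ) (hn : 2 ≤ n) (i : ℕ) : PT n :=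
  if h3 : 3 ≤ i ∧ i ≤ n then opBij ⟨i - 1, by omega⟩ ⟨i - 3, by omega⟩
  else if i = 1 then
    opBij ⟨0, by omega⟩ (if n % 2 = 1 then ⟨n - 1, by omega⟩ else ⟨n - 2, by omega⟩)
  else
    opBij ⟨1, by omega⟩ (if n % 2 = 1 then ⟨n - 2, by omega⟩ else ⟨n - 1, by omega⟩)

/-- The generating set `{x_1, …, x_n}` of `AO_n`. -/
def AOgens (n : ℕ) (hn : 2 ≤ n) : Set (PT n) :=
  {f | ∃ i : ℕ, 1 ≤ i ∧ i ≤ n ∧ f = xg n hn i}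

-- ## new stuff

/-- value function of opBij -/
def FV (i j x : ℕ) : ℕ :=
  if x < i then (if x < j then x else x + 1)
  else (if x - 1 < j then x - 1 else x)

lemma FV_lt {n : ℕ} {i j x : ℕ} (hi : i < n) (hj : j < n) (hx : x < n) (hxi : x ≠ i) :
    FV i j x < n := by unfold FV; split_ifs <;> omega

lemma opBij_eval {n : ℕ} {i j x : Fin n} (h : x ≠ i) :
    opBij i j x = some ⟨FV i.val j.val x.val, FV_lt i.isLt j.isLt x.isLt (by
      simpa [Fin.ext_iff] using h)⟩ := by
  unfold opBij FV
  rw [dif_neg h]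
  split_ifs <;> simp_all <;> omega

lemma opBij_self {n : ℕ} {i j : Fin n} : opBij i j i = none := by
  unfold opBij; simp

lemma opBij_some_iff {n : ℕ} {i j : Fin n} {x a : Fin n} :
    opBij i j x = some a ↔ x ≠ i ∧ a.val = FV i.val j.val x.val := by
  constructor
  · intro h
    have hx : x ≠ i := by rintro rfl; rw [opBij_self] at h; exact absurd h (by simp)
    rw [opBij_eval hx] at h
    exact ⟨hx, by simpa [Fin.ext_iff] using (Option.some_injective _ h).symm⟩
  · rintro ⟨hx, ha⟩
    rw [opBij_eval hx]
    exact congrArg some (Fin.ext ha.symm)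

lemma FV_ne {i j x : ℕ} (hxi : x ≠ i) : FV i j x ≠ j := by
  unfold FV; split_ifs <;> omega

lemma FV_inv {i j x : ℕ} (hxi : x ≠ i) (hi : 0 < i ∨ True) : FV j i (FV i j x) = x := by
  unfold FV; split_ifs <;> omega

lemma FV_comp {i j k x : ℕ} (hxi : x ≠ i) : FV j k (FV i j x) = FV i k x := by
  unfold FV; split_ifs <;> omega

lemma FV_inj {i j x y : ℕ} (hx : x ≠ i) (hy : y ≠ i) (h : FV i j x = FV i j y) : x = y := by
  unfold FV at h; split_ifs at h <;> omega

lemma FV_mono {i j x y : ℕ} (hx : x ≠ i) (hy : y ≠ i) (h : x ≤ y) : FV i j x ≤ FV i j y := by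
  unfold FV; split_ifs <;> omega

lemma opBij_pInj {n : ℕ} (i j : Fin n) : pInj (opBij i j) := by
  intro x y a hx hy
  rw [opBij_some_iff] at hx hy
  exact Fin.ext (FV_inj (fun h => hx.1 (Fin.ext h)) (fun h => hy.1 (Fin.ext h))
    (by rw [← hx.2, ← hy.2]))

lemma opBij_orderPres {n : ℕ} (i j : Fin n) : orderPres (opBij i j) := by
  intro x y a b hx hy hxy
  rw [opBij_some_iff] at hx hy
  have := FV_mono (i := i.val) (j := j.val) (fun h => hx.1 (Fin.ext h))
    (fun h => hy.1 (Fin.ext h)) hxy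
  simp [Fin.le_def, hx.2, hy.2, this]

lemma opBij_dom {n : ℕ} (i j : Fin n) : pDom (opBij i j) = Finset.univ.erase i := by
  ext x
  simp only [pDom, Finset.mem_filter, Finset.mem_univ, true_and, Finset.mem_erase, and_true]
  constructor
  · intro h
    rintro rfl
    rw [opBij_self] at h; simp at h
  · intro h
    rw [opBij_eval h]; rfl

lemma opBij_inv {n : ℕ} {i j x a : Fin n} (h : opBij i j x = some a) :
    opBij j i a = some x := by
  rw [opBij_some_iff] at h ⊢
  obtain ⟨hx, ha⟩ := h
  have hx' : x.val ≠ i.val := fun hh => hx (Fin.ext hh)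
  refine ⟨fun hh => FV_ne hx' (by rw [← ha, hh]), ?_⟩
  rw [ha, FV_inv hx' (Or.inr trivial)]

lemma opBij_im {n : ℕ} (i j : Fin n) : pIm (opBij i j) = Finset.univ.erase j := by
  ext b
  simp only [pIm, Finset.mem_filter, Finset.mem_univ, true_and, Finset.mem_erase, and_true]
  constructor
  · rintro ⟨x, hx⟩
    rw [opBij_some_iff] at hx
    rintro rfl
    exact FV_ne (fun hh => hx.1 (Fin.ext hh)) hx.2.symm
  · intro hb
    exact ⟨_, opBij_inv (opBij_eval (i := j) (j := i) hb)⟩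

lemma opBij_mul {n : ℕ} (i j k : Fin n) : opBij i j * opBij j k = opBij i k := by
  funext x
  show (opBij i j x).bind (opBij j k) = opBij i k x
  by_cases hx : x = i
  · subst hx; rw [opBij_self, opBij_self]; rfl
  · rw [opBij_eval hx, opBij_eval (i := i) (j := k) hx]
    have hx' : x.val ≠ i.val := fun hh => hx (Fin.ext hh)
    have hne : FV i.val j.val x.val ≠ j.val := FV_ne hx'
    show opBij j k _ = _
    rw [opBij_eval (by simpa [Fin.ext_iff] using hne)]
    exact congrArg some (Fin.ext (FV_comp hx'))

/-- number of smaller domain elements = number of smaller image elements -/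
lemma card_lt_eq {n : ℕ} {f : PT n} (hinj : pInj f) (hord : orderPres f)
    {x a : Fin n} (hxa : f x = some a) :
    ((pDom f).filter (· < x)).card = ((pIm f).filter (· < a)).card := by
  apply Finset.card_bij (fun y _ => (f y).getD a)
  · intro y hy
    simp only [pDom, Finset.mem_filter, Finset.mem_univ, true_and] at hy
    obtain ⟨hy1, hy2⟩ := hy
    obtain ⟨b, hb⟩ := Option.isSome_iff_exists.mp hy1
    simp only [pIm, Finset.mem_filter, Finset.mem_univ, true_and, hb, Option.getD_some]
    refine ⟨⟨y, hb⟩, ?_⟩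
    have hle : b ≤ a := hord y x b a hb hxa (le_of_lt hy2)
    have hne : b ≠ a := fun h => absurd (hinj y x a (h ▸ hb) hxa) (ne_of_lt hy2)
    exact lt_of_le_of_ne hle hne
  · intro y1 h1 y2 h2 heq
    simp only [pDom, Finset.mem_filter, Finset.mem_univ, true_and] at h1 h2
    obtain ⟨b1, hb1⟩ := Option.isSome_iff_exists.mp h1.1
    obtain ⟨b2, hb2⟩ := Option.isSome_iff_exists.mp h2.1
    rw [hb1, hb2] at heq; simp only [Option.getD_some] at heq
    subst heq
    exact hinj y1 y2 b1 hb1 hb2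
  · intro b hb
    simp only [pIm, Finset.mem_filter, Finset.mem_univ, true_and] at hb
    obtain ⟨⟨y, hy⟩, hba⟩ := hb
    have hymem : y ∈ (pDom f).filter (· < x) := by
      simp only [pDom, Finset.mem_filter, Finset.mem_univ, true_and, hy]
      refine ⟨rfl, ?_⟩
      rcases lt_or_ge y x with h | h
      · exact h
      · exact absurd (hord x y a b hxa hy h) (not_le.mpr hba)
    exact ⟨y, hymem, by rw [hy, Option.getD_some]⟩

/-- in a finset, elements with the same number of strictly-smaller members are equal -/
lemma eq_of_card_lt_eq {n : ℕ} {E : Finset (Fin n)} {a b : Fin n}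
    (ha : a ∈ E) (hb : b ∈ E)
    (h : (E.filter (· < a)).card = (E.filter (· < b)).card) : a = b := by
  by_contra hne
  have key : ∀ u v : Fin n, u ∈ E → u < v →
      (E.filter (· < u)).card < (E.filter (· < v)).card := by
    intro u v hu huv
    apply Finset.card_lt_card
    have hsub : E.filter (· < u) ⊆ E.filter (· < v) := by
      intro y hy
      rw [Finset.mem_filter] at hy ⊢
      exact ⟨hy.1, lt_trans hy.2 huv⟩
    rw [Finset.ssubset_iff_of_subset hsub]
    exact ⟨u, Finset.mem_filter.mpr ⟨hu, huv⟩, fun hc => absurd (Finset.mem_filter.mp hc).2 (lt_irrefl u)⟩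
  rcases lt_or_gt_of_ne hne with hlt | hlt
  · exact absurd h (Nat.ne_of_lt (key a b ha hlt))
  · exact absurd h.symm (Nat.ne_of_lt (key b a hb hlt))

lemma mem_pIm_of {n : ℕ} {f : PT n} {x a : Fin n} (h : f x = some a) : a ∈ pIm f := by
  simp only [pIm, Finset.mem_filter, Finset.mem_univ, true_and]; exact ⟨x, h⟩

lemma mem_pDom_iff {n : ℕ} {f : PT n} {x : Fin n} : x ∈ pDom f ↔ ∃ a, f x = some a := by
  simp [pDom, Option.isSome_iff_exists]

/-- Uniqueness: order-preserving injective partial maps with same dom and im coincide. -/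
lemma op_unique {n : ℕ} {f g : PT n} (hf1 : pInj f) (hf2 : orderPres f)
    (hg1 : pInj g) (hg2 : orderPres g) (hd : pDom f = pDom g) (hi : pIm f = pIm g) :
    f = g := by
  funext x
  by_cases hx : x ∈ pDom f
  · obtain ⟨a, ha⟩ := mem_pDom_iff.mp hx
    obtain ⟨b, hb⟩ := mem_pDom_iff.mp (hd ▸ hx)
    have h1 := card_lt_eq hf1 hf2 ha
    have h2 := card_lt_eq hg1 hg2 hb
    rw [hd, hi] at h1
    have hab : a = b :=
      eq_of_card_lt_eq (hi ▸ mem_pIm_of ha) (mem_pIm_of hb) (h1.symm.trans h2)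
    rw [ha, hb, hab]
  · have hx2 : x ∉ pDom g := hd ▸ hx
    rw [mem_pDom_iff] at hx hx2
    push_neg at hx hx2
    rcases hfx : f x with _ | a
    · rcases hgx : g x with _ | b
      · rfl
      · exact absurd hgx (hx2 b)
    · exact absurd hfx (hx a)

/-- σ_{j-d, j} as a product of adjacent transpositions. -/
def sigmaP (n : ℕ) (hn : 0 < n) (j : ℕ) (hj : j < n) : ℕ → Equiv.Perm (Fin n)
  | 0 => 1
  | d+1 => sigmaP n hn j hj d * Equiv.swap ⟨j - (d+1), by omega⟩ ⟨j - d, by omega⟩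

lemma sigmaP_sign {n : ℕ} (hn : 0 < n) {j : ℕ} (hj : j < n) :
    ∀ d : ℕ, d ≤ j → Equiv.Perm.sign (sigmaP n hn j hj d) = (-1) ^ d := by
  intro d
  induction d with
  | zero => intro _; simp [sigmaP]
  | succ d ih =>
    intro hd
    rw [sigmaP, map_mul, ih (by omega), Equiv.Perm.sign_swap (by
      simp only [ne_eq, Fin.mk.injEq]; omega)]
    rw [pow_add, pow_one]

lemma sigmaP_extends {n : ℕ} (hn : 0 < n) {j : ℕ} (hj : j < n) :
    ∀ d : ℕ, d ≤ j → extendsTo (sigmaP n hn j hj d) (opBij ⟨j - d, by omega⟩ ⟨j, hj⟩) := by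
  intro d
  induction d with
  | zero =>
    intro _ x a hxa
    rw [opBij_some_iff] at hxa
    have hxj : x.val ≠ j := fun h => hxa.1 (Fin.ext (by simpa using h))
    have hax : a.val = x.val := by
      rw [hxa.2]; unfold FV; split_ifs <;> simp_all <;> omega
    rw [show sigmaP n hn j hj 0 = 1 from rfl]
    exact Fin.ext (by simpa using hax.symm)
  | succ d ih =>
    intro hd x a hxa
    rw [opBij_some_iff] at hxa
    obtain ⟨hx, ha⟩ := hxa
    have hx' : x.val ≠ j - (d+1) := fun h => hx (Fin.ext (by simpa using h))
    rw [sigmaP]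
    show (sigmaP n hn j hj d) (Equiv.swap ⟨j - (d+1), by omega⟩ ⟨j - d, by omega⟩ x) = a
    by_cases hxd : x.val = j - d
    · have hsw : (Equiv.swap (⟨j - (d+1), by omega⟩ : Fin n) ⟨j - d, by omega⟩) x
          = ⟨j - (d+1), by omega⟩ := by
        rw [Equiv.swap_apply_def]
        split_ifs with h1 h2
        · exact absurd (congrArg Fin.val h1) (by simpa using hx')
        · rfl
        · exact absurd (Fin.ext hxd : x = ⟨j - d, by omega⟩) h2
      rw [hsw]
      have h2 : opBij (⟨j - d, by omega⟩ : Fin n) ⟨j, hj⟩ ⟨j - (d+1), by omega⟩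
          = some ⟨FV (j-d) j (j-(d+1)), by have := FV_lt (n := n) (i := j-d) (j := j) (x := j-(d+1)) (by omega) hj (by omega) (by omega); exact this⟩ :=
        opBij_eval (by simp only [ne_eq, Fin.mk.injEq]; omega)
      have h3 := ih (by omega) _ _ h2
      rw [h3]
      apply Fin.ext
      simp only [ha]
      unfold FV; split_ifs <;> omega
    · have hswap : Equiv.swap (⟨j - (d+1), by omega⟩ : Fin n) ⟨j - d, by omega⟩ x = x := by
        apply Equiv.swap_apply_of_ne_of_ne <;> (simp only [ne_eq, Fin.ext_iff]; omega)
      rw [hswap]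
      have h2 : opBij (⟨j - d, by omega⟩ : Fin n) ⟨j, hj⟩ x
          = some ⟨FV (j-d) j x.val, FV_lt (by omega) hj x.isLt (by simp only [ne_eq]; omega)⟩ :=
        opBij_eval (by simp only [ne_eq, Fin.ext_iff]; omega)
      rw [ih (by omega) _ _ h2]
      apply Fin.ext
      simp only [ha]
      unfold FV; split_ifs <;> omega

/-- Two permutations agreeing off one point are equal. -/
lemma perm_eq_off_one {n : ℕ} {σ τ : Equiv.Perm (Fin n)} {i : Fin n}
    (h : ∀ x, x ≠ i → σ x = τ x) : σ = τ := by
  apply Equiv.ext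
  intro x
  by_cases hx : x = i
  · subst hx
    have hy : τ.symm (σ x) = x := by
      by_contra hne
      have h1 : σ (τ.symm (σ x)) = τ (τ.symm (σ x)) := h _ hne
      rw [Equiv.apply_symm_apply] at h1
      exact hne (σ.injective h1)
    calc σ x = τ (τ.symm (σ x)) := (Equiv.apply_symm_apply _ _).symm
    _ = τ x := by rw [hy]
  · exact h x hx

lemma pIm_card {n : ℕ} {f : PT n} (hinj : pInj f) : (pIm f).card = prank f := by
  unfold prank
  apply Finset.card_bij (fun b hb => (Finset.univ.filter fun x => f x = some b).min'
    (by
      simp only [pIm, Finset.mem_filter, Finset.mem_univ, true_and] at hb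
      obtain ⟨x, hx⟩ := hb
      exact ⟨x, by simp [hx]⟩))
  · intro b hb
    have hne : (Finset.univ.filter fun x => f x = some b).Nonempty := by
      simp only [pIm, Finset.mem_filter, Finset.mem_univ, true_and] at hb
      obtain ⟨x, hx⟩ := hb
      exact ⟨x, by simp [hx]⟩
    have := Finset.min'_mem _ hne
    simp only [Finset.mem_filter, Finset.mem_univ, true_and] at this
    simp [pDom, this]
  · intro b1 h1 b2 h2 heq
    have hne1 : (Finset.univ.filter fun x => f x = some b1).Nonempty := by
      simp only [pIm, Finset.mem_filter, Finset.mem_univ, true_and] at h1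
      obtain ⟨x, hx⟩ := h1; exact ⟨x, by simp [hx]⟩
    have hne2 : (Finset.univ.filter fun x => f x = some b2).Nonempty := by
      simp only [pIm, Finset.mem_filter, Finset.mem_univ, true_and] at h2
      obtain ⟨x, hx⟩ := h2; exact ⟨x, by simp [hx]⟩
    have hm1 := Finset.min'_mem _ hne1
    have hm2 := Finset.min'_mem _ hne2
    simp only [Finset.mem_filter, Finset.mem_univ, true_and] at hm1 hm2
    rw [heq] at hm1
    rw [hm1] at hm2
    exact Option.some_injective _ hm2
  · intro x hx
    rw [mem_pDom_iff] at hx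
    obtain ⟨b, hb⟩ := hx
    refine ⟨b, mem_pIm_of hb, ?_⟩
    have hne : (Finset.univ.filter fun y => f y = some b).Nonempty := ⟨x, by simp [hb]⟩
    have hm := Finset.min'_mem _ hne
    simp only [Finset.mem_filter, Finset.mem_univ, true_and] at hm
    exact (hinj _ _ _ hm hb)

lemma prank_le {n : ℕ} (f : PT n) : prank f ≤ n := by
  simpa [prank] using Finset.card_le_univ (pDom f)

lemma one_eval {n : ℕ} (x : Fin n) : (1 : PT n) x = some x := rfl

lemma pDom_one {n : ℕ} : pDom (1 : PT n) = Finset.univ := by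
  ext x; simp [pDom, one_eval]

lemma pIm_one {n : ℕ} : pIm (1 : PT n) = Finset.univ := by
  ext x
  simp only [pIm, Finset.mem_filter, Finset.mem_univ, true_and]
  exact ⟨fun _ => trivial, fun _ => ⟨x, rfl⟩⟩

lemma pDom_mul_subset {n : ℕ} (f g : PT n) : pDom (f * g) ⊆ pDom f := by
  intro x hx
  rw [mem_pDom_iff] at hx ⊢
  obtain ⟨a, ha⟩ := hx
  have : (f x).bind g = some a := ha
  cases hfx : f x with
  | none => rw [hfx] at this; exact absurd this (by simp)
  | some b => exact ⟨b, rfl⟩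

lemma pIm_mul_subset {n : ℕ} (f g : PT n) : pIm (f * g) ⊆ pIm g := by
  intro b hb
  simp only [pIm, Finset.mem_filter, Finset.mem_univ, true_and] at hb ⊢
  obtain ⟨x, hx⟩ := hb
  have : (f x).bind g = some b := hx
  cases hfx : f x with
  | none => rw [hfx] at this; exact absurd this (by simp)
  | some c => rw [hfx] at this; exact ⟨c, this⟩

lemma mul_eval {n : ℕ} {f g : PT n} {x b a : Fin n} (hf : f x = some b) (hg : g b = some a) :
    (f * g) x = some a := by
  show (f x).bind g = some a
  rw [hf]; exact hg

lemma mul_eval' {n : ℕ} {f g : PT n} {x a : Fin n} (h : (f * g) x = some a) :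
    ∃ b, f x = some b ∧ g b = some a := by
  have : (f x).bind g = some a := h
  cases hfx : f x with
  | none => rw [hfx] at this; exact absurd this (by simp)
  | some c => rw [hfx] at this; exact ⟨c, rfl, this⟩

lemma pInj_mul {n : ℕ} {f g : PT n} (hf : pInj f) (hg : pInj g) : pInj (f * g) := by
  intro x y a hx hy
  obtain ⟨b1, hb1, hb1'⟩ := mul_eval' hx
  obtain ⟨b2, hb2, hb2'⟩ := mul_eval' hy
  have := hg _ _ _ hb1' hb2'
  subst this
  exact hf _ _ _ hb1 hb2

lemma orderPres_mul {n : ℕ} {f g : PT n} (hf : orderPres f) (hg : orderPres g) :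
    orderPres (f * g) := by
  intro x y a b hx hy hxy
  obtain ⟨b1, hb1, hb1'⟩ := mul_eval' hx
  obtain ⟨b2, hb2, hb2'⟩ := mul_eval' hy
  exact hg _ _ _ _ hb1' hb2' (hf _ _ _ _ hb1 hb2 hxy)

lemma pid_eq_one {n : ℕ} : pid n = (1 : PT n) := rfl

lemma one_AO {n : ℕ} : (1 : PT n) ∈ AO n := by
  refine ⟨fun x y a b hx hy hxy => ?_, fun x y a hx hy => ?_, Or.inr ⟨1, ?_, ?_⟩⟩
  · cases hx; cases hy; exact hxy
  · cases hx; cases hy; rfl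
  · simp
  · intro x a hx; cases hx; rfl

lemma AO_mul {n : ℕ} {f g : PT n} (hf : f ∈ AO n) (hg : g ∈ AO n) : f * g ∈ AO n := by
  obtain ⟨hf1, hf2, hf3⟩ := hf
  obtain ⟨hg1, hg2, hg3⟩ := hg
  refine ⟨orderPres_mul hf1 hg1, pInj_mul hf2 hg2, ?_⟩
  by_cases hr : prank (f * g) + 2 ≤ n
  · exact Or.inl hr
  · have hrf : prank (f * g) ≤ prank f := Finset.card_le_card (pDom_mul_subset f g)
    have hrg : prank (f * g) ≤ prank g := by
      rw [← pIm_card hg2, ← pIm_card (pInj_mul hf2 hg2)]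
      exact Finset.card_le_card (pIm_mul_subset f g)
    obtain ⟨σ, hσ1, hσ2⟩ := hf3.resolve_left (by omega)
    obtain ⟨τ, hτ1, hτ2⟩ := hg3.resolve_left (by omega)
    refine Or.inr ⟨σ.trans τ, ?_, ?_⟩
    · have : σ.trans τ = τ * σ := rfl
      rw [this]
      exact mul_mem hτ1 hσ1
    · intro x a hx
      obtain ⟨b, hb, hb'⟩ := mul_eval' hx
      show τ (σ x) = a
      rw [hσ2 x b hb, hτ2 b a hb']

def AOsub (n : ℕ) : Submonoid (PT n) where
  carrier := AO n
  mul_mem' := AO_mul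
  one_mem' := one_AO

/-- a full-rank element of AO is the identity -/
lemma AO_rank_n {n : ℕ} {f : PT n} (hf : f ∈ AO n) (hr : prank f = n) : f = 1 := by
  obtain ⟨h1, h2, _⟩ := hf
  have hdom : pDom f = Finset.univ := Finset.eq_univ_of_card _ (by rw [Fintype.card_fin]; exact hr)
  have him : pIm f = Finset.univ := Finset.eq_univ_of_card _ (by
    rw [Fintype.card_fin, pIm_card h2, hr])
  apply op_unique h2 h1 (fun x y a hx hy => by
      rw [one_eval] at hx hy; cases hx; exact Option.some_injective _ hy.symm)
    (fun x y a b hx hy hxy => by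
      rw [one_eval] at hx hy
      cases hx; cases hy; exact hxy)
  · rw [hdom, pDom_one]
  · rw [him, pIm_one]

/-- rank n-1 elements of AO are the order-preserving bijections X_i → X_j -/
lemma AO_rank_classify {n : ℕ} {f : PT n} (h1 : orderPres f) (h2 : pInj f)
    (hr : prank f + 1 = n) : ∃ i j : Fin n, f = opBij i j := by
  have hd : (Finset.univ \ pDom f).card = 1 := by
    rw [Finset.card_sdiff_of_subset (Finset.subset_univ _)]
    simp [Finset.card_univ, prank] at hr ⊢
    omega
  obtain ⟨i, hi⟩ := Finset.card_eq_one.mp hd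
  have hdom : pDom f = Finset.univ.erase i := by
    rw [Finset.erase_eq, ← hi]
    exact (Finset.sdiff_sdiff_eq_self (Finset.subset_univ _)).symm
  have hic : (Finset.univ \ pIm f).card = 1 := by
    rw [Finset.card_sdiff_of_subset (Finset.subset_univ _), pIm_card h2]
    simp [Finset.card_univ] at hr ⊢
    omega
  obtain ⟨j, hj⟩ := Finset.card_eq_one.mp hic
  have him : pIm f = Finset.univ.erase j := by
    rw [Finset.erase_eq, ← hj]
    exact (Finset.sdiff_sdiff_eq_self (Finset.subset_univ _)).symm
  exact ⟨i, j, op_unique h2 h1 (opBij_pInj i j) (opBij_orderPres i j)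
    (hdom.trans (opBij_dom i j).symm) (him.trans (opBij_im i j).symm)⟩

lemma prank_opBij {n : ℕ} (i j : Fin n) : prank (opBij i j) + 1 = n := by
  unfold prank
  rw [opBij_dom, Finset.card_erase_of_mem (Finset.mem_univ i), Finset.card_univ,
    Fintype.card_fin]
  have : 0 < n := i.pos
  omega

lemma extendsTo_inv {n : ℕ} {σ : Equiv.Perm (Fin n)} {i j : Fin n}
    (h : extendsTo σ (opBij i j)) : extendsTo σ⁻¹ (opBij j i) := by
  intro y x hyx
  have := opBij_inv hyx
  have h2 := h x y this
  rw [← h2]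
  simp

lemma sigmaP_extends' {n : ℕ} (hn : 0 < n) {i j : Fin n} (hij : i.val ≤ j.val) :
    extendsTo (sigmaP n hn j.val j.isLt (j.val - i.val)) (opBij i j) := by
  have h := sigmaP_extends hn j.isLt (j.val - i.val) (by omega)
  have : (⟨j.val - (j.val - i.val), by omega⟩ : Fin n) = i := Fin.ext (by simp; omega)
  rw [this] at h
  have : (⟨j.val, j.isLt⟩ : Fin n) = j := Fin.ext rfl
  rw [this] at h
  exact h

lemma even_of_sign_one {n : ℕ} (hn : 0 < n) {j : ℕ} (hj : j < n) {d : ℕ} (hd : d ≤ j)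
    {σ : Equiv.Perm (Fin n)} (hσ : σ = sigmaP n hn j hj d)
    (h1 : Equiv.Perm.sign σ = 1) : d % 2 = 0 := by
  rw [hσ, sigmaP_sign hn hj d hd] at h1
  rcases Nat.even_or_odd d with he | ho
  · exact Nat.even_iff.mp he
  · rw [Odd.neg_one_pow ho] at h1
    exact absurd h1 (by decide)

/-- same parity implies opBij lies in AO -/
lemma opBij_mem_AO {n : ℕ} {i j : Fin n} (hpar : i.val % 2 = j.val % 2) :
    opBij i j ∈ AO n := by
  have hn : 0 < n := i.pos
  refine ⟨opBij_orderPres i j, opBij_pInj i j, Or.inr ?_⟩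
  rcases le_total i.val j.val with hij | hij
  · refine ⟨sigmaP n hn j.val j.isLt (j.val - i.val), ?_, sigmaP_extends' hn hij⟩
    rw [Equiv.Perm.mem_alternatingGroup, sigmaP_sign hn j.isLt _ (by omega)]
    exact Even.neg_one_pow (Nat.even_iff.mpr (by omega))
  · refine ⟨(sigmaP n hn i.val i.isLt (i.val - j.val))⁻¹, ?_, ?_⟩
    · rw [Equiv.Perm.mem_alternatingGroup, map_inv, sigmaP_sign hn i.isLt _ (by omega)]
      rw [Even.neg_one_pow (Nat.even_iff.mpr (by omega))]
      rfl
    · exact extendsTo_inv (sigmaP_extends' hn hij)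

/-- parity of opBij in AO -/
lemma parity_of_opBij_AO {n : ℕ} (hn : 2 ≤ n) {i j : Fin n} (h : opBij i j ∈ AO n) :
    i.val % 2 = j.val % 2 := by
  have hn0 : 0 < n := by omega
  obtain ⟨h1, h2, h3⟩ := h
  have hrank := prank_opBij i j
  obtain ⟨σ, hσ1, hσ2⟩ := h3.resolve_left (by omega)
  rw [Equiv.Perm.mem_alternatingGroup] at hσ1
  rcases le_total i.val j.val with hij | hij
  · have hext := sigmaP_extends' hn0 hij
    have heq : σ = sigmaP n hn0 j.val j.isLt (j.val - i.val) := by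
      apply perm_eq_off_one (i := i)
      intro x hx
      rw [hσ2 x _ (opBij_eval hx), hext x _ (opBij_eval hx)]
    have := even_of_sign_one hn0 j.isLt (d := j.val - i.val) (by omega) heq (heq ▸ hσ1)
    omega
  · have hext := sigmaP_extends' hn0 (i := j) (j := i) hij
    have hσinv : extendsTo σ⁻¹ (opBij j i) := extendsTo_inv hσ2
    have heq : σ⁻¹ = sigmaP n hn0 i.val i.isLt (i.val - j.val) := by
      apply perm_eq_off_one (i := j)
      intro x hx
      rw [hσinv x _ (opBij_eval hx), hext x _ (opBij_eval hx)]
    have hs : Equiv.Perm.sign σ⁻¹ = 1 := by rw [map_inv, hσ1]; rfl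
    have := even_of_sign_one hn0 i.isLt (d := i.val - j.val) (by omega) heq hs
    omega

section Gens
variable {n : ℕ} (hn : 2 ≤ n)

/-- top element of each parity class -/
def topP (n p : ℕ) : ℕ := if (n - 1) % 2 = p then n - 1 else n - 2

lemma topP_lt (hn : 2 ≤ n) (p : ℕ) : topP n p < n := by unfold topP; split_ifs <;> omega

lemma topP_par (hn : 2 ≤ n) (p : ℕ) (hp : p < 2) : topP n p % 2 = p := by
  unfold topP; split_ifs <;> omega

lemma topP_max (hn : 2 ≤ n) {m p : ℕ} (hm : m < n) (hpar : m % 2 = p) : m ≤ topP n p := by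
  unfold topP; split_ifs <;> omega

lemma gen_mem {i : ℕ} (h1 : 1 ≤ i) (h2 : i ≤ n) :
    xg n hn i ∈ Submonoid.closure (AOgens n hn) :=
  Submonoid.subset_closure ⟨i, h1, h2, rfl⟩

lemma gen_step {a : ℕ} (h : a + 3 ≤ n) :
    opBij (⟨a + 2, by omega⟩ : Fin n) ⟨a, by omega⟩ ∈ Submonoid.closure (AOgens n hn) := by
  have h0 := gen_mem hn (i := a + 3) (by omega) h
  rw [xg, dif_pos ⟨by omega, h⟩] at h0
  exact h0

lemma gen_wrap (p : ℕ) (hp : p < 2) (hpn : p < n) :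
    opBij (⟨p, hpn⟩ : Fin n) ⟨topP n p, topP_lt hn p⟩ ∈ Submonoid.closure (AOgens n hn) := by
  interval_cases p
  · have h0 := gen_mem hn (i := 1) le_rfl (by omega)
    rw [xg, dif_neg (by omega), if_pos rfl] at h0
    by_cases h2 : n % 2 = 1
    · rw [if_pos h2] at h0
      have he2 : topP n 0 = n - 1 := by unfold topP; split_ifs <;> omega
      have : (⟨topP n 0, topP_lt hn 0⟩ : Fin n) = ⟨n - 1, by omega⟩ := Fin.ext (by
        show topP n 0 = n - 1; omega)
      rw [this]
      exact h0
    · rw [if_neg h2] at h0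
      have he2 : topP n 0 = n - 2 := by unfold topP; split_ifs <;> omega
      have : (⟨topP n 0, topP_lt hn 0⟩ : Fin n) = ⟨n - 2, by omega⟩ := Fin.ext (by
        show topP n 0 = n - 2; omega)
      rw [this]
      exact h0
  · have h0 := gen_mem hn (i := 2) (by omega) hn
    rw [xg, dif_neg (by omega), if_neg (by omega)] at h0
    by_cases h2 : n % 2 = 1
    · rw [if_pos h2] at h0
      have he2 : topP n 1 = n - 2 := by unfold topP; split_ifs <;> omega
      have : (⟨topP n 1, topP_lt hn 1⟩ : Fin n) = ⟨n - 2, by omega⟩ := Fin.ext (by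
        show topP n 1 = n - 2; omega)
      rw [this]
      exact h0
    · rw [if_neg h2] at h0
      have he2 : topP n 1 = n - 1 := by unfold topP; split_ifs <;> omega
      have : (⟨topP n 1, topP_lt hn 1⟩ : Fin n) = ⟨n - 1, by omega⟩ := Fin.ext (by
        show topP n 1 = n - 1; omega)
      rw [this]
      exact h0

lemma strict_descent : ∀ (k : ℕ) (i j : Fin n), i.val = j.val + 2 * (k + 1) →
    opBij i j ∈ Submonoid.closure (AOgens n hn) := by
  intro k
  induction k with
  | zero =>
    intro i j h
    have hlt : j.val + 3 ≤ n := by have := i.isLt; omega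
    have h0 := gen_step hn hlt
    have e1 : (⟨j.val + 2, by omega⟩ : Fin n) = i := Fin.ext (show j.val + 2 = i.val by omega)
    have e2 : (⟨j.val, by omega⟩ : Fin n) = j := Fin.ext rfl
    rw [e1, e2] at h0
    exact h0
  | succ k ih =>
    intro i j h
    have hmid : (j.val + 2) < n := by have := i.isLt; omega
    have : opBij i j = opBij i ⟨j.val + 2, hmid⟩ * opBij ⟨j.val + 2, hmid⟩ j :=
      (opBij_mul _ _ _).symm
    rw [this]
    refine mul_mem (ih i ⟨j.val + 2, hmid⟩ ?_) (gen_step hn (by have := i.isLt; omega))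
    show i.val = (j.val + 2) + 2 * (k + 1)
    omega

/-- all same-parity opBij lie in the closure -/
lemma opBij_mem_M {i j : Fin n} (hpar : i.val % 2 = j.val % 2) :
    opBij i j ∈ Submonoid.closure (AOgens n hn) := by
  have hp2 : j.val % 2 < 2 := Nat.mod_lt _ (by omega)
  have hpn : j.val % 2 < n := by omega
  have hwrap := gen_wrap hn (j.val % 2) hp2 hpn
  have hbj : opBij (⟨j.val % 2, hpn⟩ : Fin n) j ∈ Submonoid.closure (AOgens n hn) := by
    by_cases hTj : (⟨topP n (j.val % 2), topP_lt hn _⟩ : Fin n) = j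
    · rwa [hTj] at hwrap
    · have hjT : j.val ≤ topP n (j.val % 2) := topP_max hn j.isLt rfl
      have hTpar : topP n (j.val % 2) % 2 = j.val % 2 := topP_par hn _ hp2
      have hlt : j.val < topP n (j.val % 2) := by
        rcases lt_or_eq_of_le hjT with h | h
        · exact h
        · exact absurd (Fin.ext h.symm) hTj
      obtain ⟨k, hk⟩ : ∃ k, topP n (j.val % 2) = j.val + 2 * (k + 1) :=
        ⟨(topP n (j.val % 2) - j.val - 2) / 2, by omega⟩
      rw [show opBij (⟨j.val % 2, hpn⟩ : Fin n) j
          = opBij ⟨j.val % 2, hpn⟩ ⟨topP n (j.val % 2), topP_lt hn _⟩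
            * opBij ⟨topP n (j.val % 2), topP_lt hn _⟩ j from (opBij_mul _ _ _).symm]
      exact mul_mem hwrap (strict_descent hn k _ j hk)
  by_cases hib : i = (⟨j.val % 2, hpn⟩ : Fin n)
  · rw [hib]; exact hbj
  · have hne : i.val ≠ j.val % 2 := fun h => hib (Fin.ext h)
    obtain ⟨k, hk⟩ : ∃ k, i.val = (j.val % 2) + 2 * (k + 1) :=
      ⟨(i.val - j.val % 2 - 2) / 2, by omega⟩
    rw [show opBij i j = opBij i ⟨j.val % 2, hpn⟩ * opBij (⟨j.val % 2, hpn⟩ : Fin n) j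
      from (opBij_mul _ _ _).symm]
    exact mul_mem (strict_descent hn k i _ hk) hbj

/-- the generators all lie in AO -/
lemma gens_sub_AO : AOgens n hn ⊆ AO n := by
  rintro f ⟨i, h1, h2, rfl⟩
  rw [xg]
  split_ifs with h3 h4 h5 h6
  · exact opBij_mem_AO (show (i-1) % 2 = (i-3) % 2 by omega)
  · exact opBij_mem_AO (show 0 % 2 = (n-1) % 2 by omega)
  · exact opBij_mem_AO (show 0 % 2 = (n-2) % 2 by omega)
  · exact opBij_mem_AO (show 1 % 2 = (n-2) % 2 by omega)
  · exact opBij_mem_AO (show 1 % 2 = (n-1) % 2 by omega)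

lemma closure_sub_AO : (Submonoid.closure (AOgens n hn) : Set (PT n)) ⊆ AO n := by
  intro f hf
  exact (Submonoid.closure_le (S := AOsub n)).mpr (gens_sub_AO hn) hf

end Gens

open Classical in
noncomputable def pInv {n : ℕ} (f : PT n) : PT n := fun y =>
  if h : ∃ x, f x = some y then some h.choose else none

lemma pInv_some_iff {n : ℕ} {f : PT n} (hf : pInj f) {x y : Fin n} :
    pInv f y = some x ↔ f x = some y := by
  constructor
  · intro h
    unfold pInv at h
    split_ifs at h with hex
    · have hspec := hex.choose_spec
      have : hex.choose = x := Option.some_injective _ h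
      rwa [this] at hspec
  · intro h
    have hex : ∃ z, f z = some y := ⟨x, h⟩
    unfold pInv
    rw [dif_pos hex]
    exact congrArg some (hf _ _ _ hex.choose_spec h)

lemma pInv_none_iff {n : ℕ} {f : PT n} {y : Fin n} :
    pInv f y = none ↔ ∀ x, f x ≠ some y := by
  unfold pInv
  split_ifs with hex
  · exact ⟨fun h => absurd h (by simp), fun h => absurd hex.choose_spec (h _)⟩
  · exact ⟨fun _ x hx => hex ⟨x, hx⟩, fun _ => rfl⟩

lemma optExt {α : Type*} {o₁ o₂ : Option α} (h : ∀ x, o₁ = some x ↔ o₂ = some x) : o₁ = o₂ := by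
  cases o₁ with
  | none => cases o₂ with
    | none => rfl
    | some b => exact absurd ((h b).mpr rfl) (by simp)
  | some a => exact ((h a).mp rfl).symm

lemma pInv_pInj {n : ℕ} {f : PT n} (hf : pInj f) : pInj (pInv f) := by
  intro x y a hx hy
  rw [pInv_some_iff hf] at hx hy
  rw [hx] at hy
  exact Option.some_injective _ hy

lemma pInv_orderPres {n : ℕ} {f : PT n} (hf : pInj f) (ho : orderPres f) :
    orderPres (pInv f) := by
  intro x y a b hx hy hxy
  rw [pInv_some_iff hf] at hx hy
  by_contra hab
  push_neg at hab
  have := ho _ _ _ _ hy hx (le_of_lt hab)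
  have heq : x = y := le_antisymm hxy this
  subst heq
  exact absurd hab (by rw [hf a b x hx hy]; exact lt_irrefl _)

lemma pInv_dom {n : ℕ} {f : PT n} (hf : pInj f) : pDom (pInv f) = pIm f := by
  ext y
  rw [mem_pDom_iff]
  simp only [pIm, Finset.mem_filter, Finset.mem_univ, true_and]
  constructor
  · rintro ⟨x, hx⟩; exact ⟨x, (pInv_some_iff hf).mp hx⟩
  · rintro ⟨x, hx⟩; exact ⟨x, (pInv_some_iff hf).mpr hx⟩

lemma pInv_im {n : ℕ} {f : PT n} (hf : pInj f) : pIm (pInv f) = pDom f := by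
  ext x
  rw [mem_pDom_iff]
  simp only [pIm, Finset.mem_filter, Finset.mem_univ, true_and]
  constructor
  · rintro ⟨y, hy⟩; exact ⟨y, (pInv_some_iff hf).mp hy⟩
  · rintro ⟨y, hy⟩; exact ⟨y, (pInv_some_iff hf).mpr hy⟩

lemma pInv_mul {n : ℕ} {f g : PT n} (hf : pInj f) (hg : pInj g) :
    pInv (f * g) = pInv g * pInv f := by
  funext y
  apply optExt
  intro x
  rw [pInv_some_iff (pInj_mul hf hg)]
  constructor
  · intro h
    obtain ⟨b, hb, hb'⟩ := mul_eval' h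
    exact mul_eval ((pInv_some_iff hg).mpr hb') ((pInv_some_iff hf).mpr hb)
  · intro h
    obtain ⟨b, hb, hb'⟩ := mul_eval' h
    rw [pInv_some_iff hg] at hb
    rw [pInv_some_iff hf] at hb'
    exact mul_eval hb' hb

lemma pInv_opBij {n : ℕ} (i j : Fin n) : pInv (opBij i j) = opBij j i := by
  funext y
  apply optExt
  intro x
  rw [pInv_some_iff (opBij_pInj i j)]
  exact ⟨fun h => opBij_inv h, fun h => opBij_inv h⟩

lemma pInv_one {n : ℕ} : pInv (1 : PT n) = 1 := by
  funext y
  apply optExt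
  intro x
  rw [pInv_some_iff (fun x y a hx hy => by
    rw [one_eval] at hx hy; cases hx; exact Option.some_injective _ hy.symm), one_eval, one_eval]
  exact ⟨fun h => by cases h; rfl, fun h => by cases h; rfl⟩

/-- the closure is closed under partial inverses -/
lemma pInv_mem_M {n : ℕ} (hn : 2 ≤ n) {f : PT n}
    (hf : f ∈ Submonoid.closure (AOgens n hn)) :
    pInv f ∈ Submonoid.closure (AOgens n hn) := by
  have key : ∀ g ∈ Submonoid.closure (AOgens n hn),
      pInj g ∧ pInv g ∈ Submonoid.closure (AOgens n hn) := by
    intro g hg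
    induction hg using Submonoid.closure_induction with
    | mem g hgen =>
      have hAO := gens_sub_AO hn hgen
      obtain ⟨i, h1, h2, rfl⟩ := hgen
      refine ⟨hAO.2.1, ?_⟩
      have hpar : ∃ a b : Fin n, xg n hn i = opBij a b ∧ a.val % 2 = b.val % 2 := by
        rw [xg]
        split_ifs with h3 h4 h5 h6
        · exact ⟨_, _, rfl, show (i-1) % 2 = (i-3) % 2 by omega⟩
        · exact ⟨_, _, rfl, show 0 % 2 = (n-1) % 2 by omega⟩
        · exact ⟨_, _, rfl, show 0 % 2 = (n-2) % 2 by omega⟩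
        · exact ⟨_, _, rfl, show 1 % 2 = (n-2) % 2 by omega⟩
        · exact ⟨_, _, rfl, show 1 % 2 = (n-1) % 2 by omega⟩
      obtain ⟨a, b, heq, hab⟩ := hpar
      rw [heq, pInv_opBij]
      exact opBij_mem_M hn hab.symm
    | one =>
      refine ⟨?_, ?_⟩
      · intro x y a hx hy
        rw [one_eval] at hx hy; cases hx; exact Option.some_injective _ hy.symm
      · rw [pInv_one]; exact one_mem _
    | mul g h hgc hhc ihg ihh =>
      refine ⟨pInj_mul ihg.1 ihh.1, ?_⟩
      rw [pInv_mul ihg.1 ihh.1]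
      exact mul_mem ihh.2 ihg.2
  exact (key f hf).2

section Moves
variable {n : ℕ}

def canonical (n r : ℕ) : Finset (Fin n) := Finset.univ.filter (fun x => x.val < r)

lemma canonical_card {r : ℕ} (hr : r ≤ n) : (canonical n r).card = r := by
  have h := Finset.card_bij (s := canonical n r) (t := Finset.range r) (fun x _ => x.val)
    (fun x hx => by
      simp only [canonical, Finset.mem_filter] at hx
      simp [hx.2])
    (fun x _ y _ h => Fin.ext h)
    (fun m hm => by
      rw [Finset.mem_range] at hm
      exact ⟨⟨m, by omega⟩, by simp [canonical, hm], rfl⟩)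
  rw [h, Finset.card_range]

def pidOn (S : Finset (Fin n)) : PT n := fun x => if x ∈ S then some x else none

lemma pidOn_some_iff {S : Finset (Fin n)} {x a : Fin n} :
    pidOn S x = some a ↔ x ∈ S ∧ a = x := by
  unfold pidOn
  split_ifs with h
  · exact ⟨fun hh => ⟨h, (Option.some_injective _ hh).symm⟩, fun hh => by rw [hh.2]⟩
  · exact ⟨fun hh => by simp at hh, fun hh => absurd hh.1 h⟩

lemma pidOn_pInj (S : Finset (Fin n)) : pInj (pidOn S) := by
  intro x y a hx hy
  rw [pidOn_some_iff] at hx hy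
  rw [← hx.2, ← hy.2]

lemma pidOn_orderPres (S : Finset (Fin n)) : orderPres (pidOn S) := by
  intro x y a b hx hy h
  rw [pidOn_some_iff] at hx hy
  rw [hx.2, hy.2]; exact h

lemma pidOn_dom (S : Finset (Fin n)) : pDom (pidOn S) = S := by
  ext x
  rw [mem_pDom_iff]
  constructor
  · rintro ⟨a, ha⟩; exact ((pidOn_some_iff).mp ha).1
  · intro h; exact ⟨x, (pidOn_some_iff).mpr ⟨h, rfl⟩⟩

lemma pidOn_im (S : Finset (Fin n)) : pIm (pidOn S) = S := by
  ext b
  simp only [pIm, Finset.mem_filter, Finset.mem_univ, true_and]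
  constructor
  · rintro ⟨x, hx⟩
    obtain ⟨h1, h2⟩ := (pidOn_some_iff).mp hx
    rwa [h2]
  · intro h; exact ⟨b, (pidOn_some_iff).mpr ⟨h, rfl⟩⟩

lemma pidOn_erase_eq_opBij (i : Fin n) : pidOn (Finset.univ.erase i) = opBij i i := by
  funext x
  by_cases hx : x = i
  · subst hx
    rw [opBij_self]
    unfold pidOn
    rw [if_neg (by simp)]
  · rw [opBij_eval hx]
    unfold pidOn
    rw [if_pos (Finset.mem_erase.mpr ⟨hx, Finset.mem_univ x⟩)]
    refine congrArg some (Fin.ext ?_).symm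
    show FV i.val i.val x.val = x.val
    have : x.val ≠ i.val := fun h => hx (Fin.ext h)
    unfold FV; split_ifs <;> omega

lemma pidOn_insert (i : Fin n) (S : Finset (Fin n)) (hi : i ∉ S) :
    pidOn S = pidOn (insert i S) * opBij i i := by
  funext x
  show pidOn S x = (pidOn (insert i S) x).bind (opBij i i)
  by_cases hx : x ∈ S
  · rw [show pidOn S x = some x from (pidOn_some_iff).mpr ⟨hx, rfl⟩,
      show pidOn (insert i S) x = some x from (pidOn_some_iff).mpr ⟨Finset.mem_insert_of_mem hx, rfl⟩]
    have hxi : x ≠ i := fun h => hi (h ▸ hx)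
    have hop : opBij i i x = some x := by
      rw [opBij_eval hxi]
      refine congrArg some (Fin.ext ?_)
      show FV i.val i.val x.val = x.val
      have : x.val ≠ i.val := fun h => hxi (Fin.ext h)
      unfold FV; split_ifs <;> omega
    exact hop.symm
  · rw [show pidOn S x = none from if_neg hx]
    by_cases hxi : x = i
    · subst hxi
      rw [show pidOn (insert x S) x = some x from (pidOn_some_iff).mpr ⟨Finset.mem_insert_self _ _, rfl⟩]
      exact (opBij_self).symm
    · rw [show pidOn (insert i S) x = none from if_neg (by
        rw [Finset.mem_insert]; push_neg; exact ⟨hxi, hx⟩)]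
      rfl

lemma pidOn_mem_M (hn : 2 ≤ n) :
    ∀ (m : ℕ) (S : Finset (Fin n)), n = S.card + m + 1 →
      pidOn S ∈ Submonoid.closure (AOgens n hn) := by
  intro m
  induction m with
  | zero =>
    intro S hS
    have hcompl : (Finset.univ \ S).card = 1 := by
      rw [Finset.card_sdiff_of_subset (Finset.subset_univ _), Finset.card_univ, Fintype.card_fin]
      omega
    obtain ⟨i, hi⟩ := Finset.card_eq_one.mp hcompl
    have hS' : S = Finset.univ.erase i := by
      rw [Finset.erase_eq, ← hi]
      exact (Finset.sdiff_sdiff_eq_self (Finset.subset_univ _)).symm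
    rw [hS', pidOn_erase_eq_opBij]
    exact opBij_mem_M hn rfl
  | succ m ih =>
    intro S hS
    have hne : (Finset.univ \ S).Nonempty := by
      rw [← Finset.card_pos, Finset.card_sdiff_of_subset (Finset.subset_univ _), Finset.card_univ,
        Fintype.card_fin]
      omega
    obtain ⟨i, hi⟩ := hne
    have hiS : i ∉ S := (Finset.mem_sdiff.mp hi).2
    rw [pidOn_insert i S hiS]
    exact mul_mem (ih (insert i S) (by rw [Finset.card_insert_of_notMem hiS]; omega))
      (opBij_mem_M hn rfl)

/-- total version of the shift map -/
def phiF (k j : ℕ) (x : Fin n) : Fin n :=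
  if k < x.val ∧ x.val ≤ j then ⟨x.val - 1, by omega⟩ else x

lemma phiF_val {k j : ℕ} {x : Fin n} :
    (phiF k j x).val = if k < x.val ∧ x.val ≤ j then x.val - 1 else x.val := by
  unfold phiF; split_ifs <;> rfl

lemma phi_opBij {k j x : Fin n} (hkj : k.val < j.val) (hx : x ≠ k) :
    opBij k j x = some (phiF k.val j.val x) := by
  rw [opBij_eval hx]
  refine congrArg some (Fin.ext ?_)
  rw [phiF_val]
  have : x.val ≠ k.val := fun h => hx (Fin.ext h)
  show FV k.val j.val x.val = _
  unfold FV; split_ifs <;> omega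

lemma phi_inj {k j : ℕ} {x y : Fin n} (hx : x.val ≠ k) (hy : y.val ≠ k)
    (h : phiF k j x = phiF k j y) : x = y := by
  have := congrArg Fin.val h
  rw [phiF_val, phiF_val] at this
  apply Fin.ext
  split_ifs at this <;> omega

/-- existence of a sum-decreasing move -/
lemma exists_move (hn : 2 ≤ n) (D : Finset (Fin n)) (hcard : D.card + 2 ≤ n)
    (hne : D ≠ canonical n D.card) :
    ∃ k j : Fin n, k ∉ D ∧ k.val < j.val ∧ k.val % 2 = j.val % 2 ∧
      ∃ x ∈ D, k.val < x.val ∧ x.val ≤ j.val := by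
  have hcompl : (Finset.univ \ D).Nonempty := by
    rw [← Finset.card_pos, Finset.card_sdiff_of_subset (Finset.subset_univ _), Finset.card_univ,
      Fintype.card_fin]
    omega
  set k := (Finset.univ \ D).min' hcompl with hk
  have hkD : k ∉ D := by
    have := Finset.min'_mem _ hcompl
    rw [← hk] at this
    exact (Finset.mem_sdiff.mp this).2
  have hbelow : ∀ y : Fin n, y < k → y ∈ D := by
    intro y hy
    by_contra hyD
    have : k ≤ y := Finset.min'_le _ _ (Finset.mem_sdiff.mpr ⟨Finset.mem_univ _, hyD⟩)
    exact absurd hy (not_lt.mpr this)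
  have hS : (D.filter (fun x => k < x)).Nonempty := by
    rw [Finset.filter_nonempty_iff]
    by_contra hcon
    push_neg at hcon
    apply hne
    have hDeq : D = canonical n k.val := by
      ext x
      simp only [canonical, Finset.mem_filter, Finset.mem_univ, true_and]
      constructor
      · intro hx
        have h1 : x ≤ k := hcon x hx
        have h2 : x ≠ k := fun h => hkD (h ▸ hx)
        exact lt_of_le_of_ne (by exact_mod_cast h1) (fun h => h2 (Fin.ext h))
      · intro hx
        exact hbelow x hx
    have : D.card = k.val := by rw [hDeq]; exact canonical_card (le_of_lt k.isLt)
    rw [this]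
    exact hDeq
  set d := (D.filter (fun x => k < x)).min' hS with hd
  have hdD : d ∈ D := by
    have := Finset.min'_mem _ hS; rw [← hd] at this
    exact (Finset.mem_filter.mp this).1
  have hkd : k < d := by
    have := Finset.min'_mem _ hS; rw [← hd] at this
    exact (Finset.mem_filter.mp this).2
  by_cases hpar : d.val % 2 = k.val % 2
  · exact ⟨k, d, hkD, hkd, hpar.symm, d, hdD, hkd, le_rfl⟩
  · by_cases hdn : d.val + 1 < n
    · exact ⟨k, ⟨d.val + 1, hdn⟩, hkD, by simp; omega, by show _ = (d.val + 1) % 2; omega,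
        d, hdD, hkd, by simp⟩
    · -- d = n - 1
      have hdval : d.val = n - 1 := by have := d.isLt; omega
      -- D contains canonical k and d, so D.card ≥ k + 1
      have hsub : insert d (canonical n k.val) ⊆ D := by
        intro x hx
        rcases Finset.mem_insert.mp hx with h | h
        · subst h; exact hdD
        · simp only [canonical, Finset.mem_filter, Finset.mem_univ, true_and] at h
          exact hbelow x h
      have hcard2 : k.val + 1 ≤ D.card := by
        have h1 : (insert d (canonical n k.val)).card = k.val + 1 := by
          rw [Finset.card_insert_of_notMem (by
            simp only [canonical, Finset.mem_filter, Finset.mem_univ, true_and, not_lt]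
            exact le_of_lt hkd), canonical_card (le_of_lt k.isLt)]
        rw [← h1]
        exact Finset.card_le_card hsub
      have hk1n : k.val + 1 < n - 1 := by omega
      have hk1D : (⟨k.val + 1, by omega⟩ : Fin n) ∉ D := by
        intro hmem
        have : d ≤ ⟨k.val + 1, by omega⟩ :=
          Finset.min'_le _ _ (Finset.mem_filter.mpr ⟨hmem, by
            show k < _
            rw [Fin.lt_def]
            simp⟩)
        rw [Fin.le_def] at this
        simp at this
        omega
      exact ⟨⟨k.val + 1, by omega⟩, d, hk1D, by simp; omega, by
        show (k.val + 1) % 2 = d.val % 2; omega, d, hdD, by simp; omega, le_rfl⟩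

end Moves

lemma Kdown {n : ℕ} (hn : 2 ≤ n) :
    ∀ (N : ℕ) (D : Finset (Fin n)), (∑ x ∈ D, x.val) ≤ N → D.card + 2 ≤ n →
    ∃ g ∈ Submonoid.closure (AOgens n hn), pDom g = D ∧ pIm g = canonical n D.card := by
  intro N
  induction N with
  | zero =>
    intro D hsum hcard
    by_cases hD : D = canonical n D.card
    · refine ⟨pidOn D, pidOn_mem_M hn (n - D.card - 1) D (by omega), pidOn_dom D, ?_⟩
      rw [pidOn_im]
      exact hD
    · obtain ⟨k, j, hkD, hkj, hpar, x₀, hx₀D, hx₀k, hx₀j⟩ := exists_move hn D hcard hD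
      exfalso
      have : 0 < ∑ x ∈ D, x.val := by
        apply Finset.sum_pos' (fun i _ => Nat.zero_le _)
        exact ⟨x₀, hx₀D, by omega⟩
      omega
  | succ N ih =>
    intro D hsum hcard
    by_cases hD : D = canonical n D.card
    · refine ⟨pidOn D, pidOn_mem_M hn (n - D.card - 1) D (by omega), pidOn_dom D, ?_⟩
      rw [pidOn_im]
      exact hD
    · obtain ⟨k, j, hkD, hkj, hpar, x₀, hx₀D, hx₀k, hx₀j⟩ := exists_move hn D hcard hD
      have hneK : ∀ a : Fin n, a ∈ D → a.val ≠ k.val := by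
        intro a ha h
        exact hkD ((Fin.ext h : a = k) ▸ ha)
      have hinjOn : Set.InjOn (phiF k.val j.val) (D : Set (Fin n)) := by
        intro a ha b hb h
        exact phi_inj (hneK a ha) (hneK b hb) h
      set D₁ := D.image (phiF k.val j.val) with hD₁
      have hcard1 : D₁.card = D.card := Finset.card_image_of_injOn hinjOn
      have hsum1 : (∑ x ∈ D₁, x.val) < ∑ x ∈ D, x.val := by
        rw [hD₁, Finset.sum_image hinjOn]
        apply Finset.sum_lt_sum
        · intro a _
          rw [phiF_val]
          split_ifs <;> omega
        · refine ⟨x₀, hx₀D, ?_⟩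
          rw [phiF_val, if_pos ⟨hx₀k, hx₀j⟩]
          omega
      obtain ⟨g', hg', hdom', him'⟩ := ih D₁ (by omega) (by omega)
      refine ⟨opBij k j * g', mul_mem (opBij_mem_M hn hpar) hg', ?_, ?_⟩
      · ext x
        rw [mem_pDom_iff]
        constructor
        · rintro ⟨a, ha⟩
          obtain ⟨b, hb, hb'⟩ := mul_eval' ha
          have hxk : x ≠ k := by
            rintro rfl
            rw [opBij_self] at hb
            exact absurd hb (by simp)
          rw [phi_opBij hkj hxk] at hb
          cases Option.some_injective _ hb
          have : phiF k.val j.val x ∈ pDom g' := mem_pDom_iff.mpr ⟨a, hb'⟩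
          rw [hdom'] at this
          obtain ⟨d, hd, hdeq⟩ := Finset.mem_image.mp this
          have : d = x := phi_inj (hneK d hd) (fun h => hxk (Fin.ext h)) hdeq
          exact this ▸ hd
        · intro hx
          have hxk : x ≠ k := fun h => hkD (h ▸ hx)
          have hmem : phiF k.val j.val x ∈ pDom g' := by
            rw [hdom']
            exact Finset.mem_image_of_mem _ hx
          obtain ⟨a, ha⟩ := mem_pDom_iff.mp hmem
          exact ⟨a, mul_eval (phi_opBij hkj hxk) ha⟩
      · rw [← hcard1, ← him']
        apply Finset.Subset.antisymm (pIm_mul_subset _ _)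
        intro b hb
        simp only [pIm, Finset.mem_filter, Finset.mem_univ, true_and] at hb ⊢
        obtain ⟨y, hy⟩ := hb
        have hymem : y ∈ pDom g' := mem_pDom_iff.mpr ⟨b, hy⟩
        rw [hdom'] at hymem
        obtain ⟨d, hd, hdeq⟩ := Finset.mem_image.mp hymem
        have hdk : d ≠ k := fun h => hkD (h ▸ hd)
        exact ⟨d, mul_eval (hdeq ▸ phi_opBij hkj hdk) hy⟩

lemma AO_sub_closure {n : ℕ} (hn : 2 ≤ n) :
    AO n ⊆ (Submonoid.closure (AOgens n hn) : Set (PT n)) := by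
  intro f hf
  obtain ⟨hord, hinj, hAI⟩ := hf
  have hle : prank f ≤ n := prank_le f
  rcases Nat.lt_or_ge (prank f + 1) n with hcase | hcase
  · -- rank ≤ n - 2
    have hr2 : prank f + 2 ≤ n := by omega
    obtain ⟨g₁, hg₁M, hdom₁, him₁⟩ :=
      Kdown hn (∑ x ∈ pDom f, x.val) (pDom f) le_rfl hr2
    have him₁ : pIm g₁ = canonical n (prank f) := him₁
    have hcardE : (pIm f).card = prank f := pIm_card hinj
    obtain ⟨g₂, hg₂M, hdom₂, him₂⟩ :=
      Kdown hn (∑ x ∈ pIm f, x.val) (pIm f) le_rfl (by omega)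
    rw [hcardE] at him₂
    have hAO₁ := closure_sub_AO hn hg₁M
    have hAO₂ := closure_sub_AO hn hg₂M
    obtain ⟨ho₁, hi₁, _⟩ := hAO₁
    obtain ⟨ho₂, hi₂, _⟩ := hAO₂
    set h := g₁ * pInv g₂ with hh
    have hhM : h ∈ Submonoid.closure (AOgens n hn) := mul_mem hg₁M (pInv_mem_M hn hg₂M)
    have hhinj : pInj h := pInj_mul hi₁ (pInv_pInj hi₂)
    have hhord : orderPres h := orderPres_mul ho₁ (pInv_orderPres hi₂ ho₂)
    have hdomh : pDom h = pDom f := by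
      ext x
      rw [mem_pDom_iff, mem_pDom_iff]
      constructor
      · rintro ⟨a, ha⟩
        obtain ⟨b, hb, _⟩ := mul_eval' ha
        have : x ∈ pDom g₁ := mem_pDom_iff.mpr ⟨b, hb⟩
        rw [hdom₁, mem_pDom_iff] at this
        exact this
      · rintro ⟨a, ha⟩
        have hx : x ∈ pDom g₁ := by rw [hdom₁, mem_pDom_iff]; exact ⟨a, ha⟩
        obtain ⟨y, hy⟩ := mem_pDom_iff.mp hx
        have hyim : y ∈ pIm g₂ := by
          rw [him₂, ← him₁]
          exact mem_pIm_of hy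
        simp only [pIm, Finset.mem_filter, Finset.mem_univ, true_and] at hyim
        obtain ⟨z, hz⟩ := hyim
        exact ⟨z, mul_eval hy ((pInv_some_iff hi₂).mpr hz)⟩
    have himh : pIm h = pIm f := by
      ext b
      simp only [pIm, Finset.mem_filter, Finset.mem_univ, true_and]
      constructor
      · rintro ⟨x, hx⟩
        obtain ⟨y, _, hy'⟩ := mul_eval' hx
        have : g₂ b = some y := (pInv_some_iff hi₂).mp hy'
        have : b ∈ pDom g₂ := mem_pDom_iff.mpr ⟨y, this⟩
        rw [hdom₂, pIm, Finset.mem_filter] at this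
        exact this.2
      · rintro ⟨z, hz⟩
        have hb : b ∈ pDom g₂ := by
          rw [hdom₂]
          exact mem_pIm_of hz
        obtain ⟨y, hy⟩ := mem_pDom_iff.mp hb
        have hyim : y ∈ pIm g₁ := by
          rw [him₁, ← him₂]
          exact mem_pIm_of hy
        simp only [pIm, Finset.mem_filter, Finset.mem_univ, true_and] at hyim
        obtain ⟨x, hx⟩ := hyim
        exact ⟨x, mul_eval hx ((pInv_some_iff hi₂).mpr hy)⟩
    have : f = h := op_unique hinj hord hhinj hhord hdomh.symm himh.symm
    rw [this]
    exact hhM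
  · rcases Nat.eq_or_lt_of_le hcase with hcase2 | hcase2
    · -- rank n - 1
      obtain ⟨i, j, hij⟩ := AO_rank_classify hord hinj hcase2.symm
      have hpar : i.val % 2 = j.val % 2 :=
        parity_of_opBij_AO hn (hij ▸ (⟨hord, hinj, hAI⟩ : f ∈ AO n))
      rw [hij]
      exact opBij_mem_M hn hpar
    · -- rank n
      have : prank f = n := by omega
      rw [AO_rank_n ⟨hord, hinj, hAI⟩ this]
      exact one_mem _

lemma FV_self {i x : ℕ} (h : x ≠ i) : FV i i x = x := by
  unfold FV; split_ifs <;> omega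

lemma opBij_id_AO {n : ℕ} (i : Fin n) : opBij i i ∈ AO n := by
  refine ⟨opBij_orderPres i i, opBij_pInj i i, Or.inr ⟨1, one_mem _, ?_⟩⟩
  intro x a hxa
  rw [opBij_some_iff] at hxa
  have hx : x.val ≠ i.val := fun h => hxa.1 (Fin.ext h)
  have : a = x := Fin.ext (by rw [hxa.2, FV_self hx])
  rw [this]
  rfl

lemma chain_head {n : ℕ} (hn : 2 ≤ n) (i : Fin n) :
    ∀ l : List (PT n), (∀ g ∈ l, g ∈ AO n) →
      pDom l.prod = Finset.univ.erase i → ∃ g ∈ l, ∃ b : Fin n, g = opBij i b := by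
  intro l
  induction l with
  | nil =>
    intro _ hdom
    rw [List.prod_nil, pDom_one] at hdom
    have : i ∈ Finset.univ.erase i := hdom ▸ Finset.mem_univ i
    simp at this
  | cons g t ih =>
    intro hAO hdom
    rw [List.prod_cons] at hdom
    have hgAO : g ∈ AO n := hAO g (List.mem_cons_self)
    have hsub : Finset.univ.erase i ⊆ pDom g := hdom ▸ pDom_mul_subset g t.prod
    have hcard : n - 1 ≤ prank g := by
      have := Finset.card_le_card hsub
      rwa [Finset.card_erase_of_mem (Finset.mem_univ i), Finset.card_univ,
        Fintype.card_fin] at this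
    rcases Nat.eq_or_lt_of_le (prank_le g) with hgn | hglt
    · -- g = 1
      have hg1 : g = 1 := AO_rank_n hgAO hgn
      rw [hg1, one_mul] at hdom
      obtain ⟨g', hg't, b, hb⟩ := ih (fun x hx => hAO x (List.mem_cons_of_mem g hx)) hdom
      exact ⟨g', List.mem_cons_of_mem g hg't, b, hb⟩
    · have hg : prank g + 1 = n := by omega
      obtain ⟨a, b, hab⟩ := AO_rank_classify hgAO.1 hgAO.2.1 hg
      have hdg : pDom g = Finset.univ.erase a := by rw [hab, opBij_dom]
      have heq : Finset.univ.erase i = Finset.univ.erase a := by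
        apply Finset.eq_of_subset_of_card_le (hdg ▸ hsub)
        rw [Finset.card_erase_of_mem (Finset.mem_univ i),
          Finset.card_erase_of_mem (Finset.mem_univ a)]
      have hia : i = a := by
        by_contra hia
        have : a ∈ Finset.univ.erase i := Finset.mem_erase.mpr ⟨fun h => hia h.symm, Finset.mem_univ a⟩
        rw [heq] at this
        simp at this
      exact ⟨g, List.mem_cons_self, b, by rw [hab, hia]⟩

lemma rank_lower_bound {n : ℕ} (hn : 2 ≤ n) (G : Set (PT n))
    (hG : (Submonoid.closure G : Set (PT n)) = AO n) : n ≤ G.ncard := by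
  have hGAO : G ⊆ AO n := fun g hg => hG ▸ Submonoid.subset_closure hg
  have hex : ∀ i : Fin n, ∃ g, g ∈ G ∧ ∃ b : Fin n, g = opBij i b := by
    intro i
    have hmem : opBij i i ∈ Submonoid.closure G := by
      have : opBij i i ∈ AO n := opBij_id_AO i
      rw [← hG] at this
      exact this
    obtain ⟨l, hl, hprod⟩ := Submonoid.exists_list_of_mem_closure hmem
    have hdom : pDom l.prod = Finset.univ.erase i := by rw [hprod, opBij_dom]
    obtain ⟨g, hgl, b, hb⟩ := chain_head hn i l (fun x hx => hGAO (hl x hx)) hdom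
    exact ⟨g, hl g hgl, b, hb⟩
  choose F hFG hFb using hex
  have hFinj : Function.Injective F := by
    intro i i' hFi
    obtain ⟨b, hb⟩ := hFb i
    obtain ⟨b', hb'⟩ := hFb i'
    rw [hb, hb'] at hFi
    have hdom : Finset.univ.erase i = Finset.univ.erase i' := by
      rw [← opBij_dom i b, ← opBij_dom i' b', hFi]
    by_contra hii
    have : i' ∈ Finset.univ.erase i := Finset.mem_erase.mpr ⟨fun h => hii h.symm, Finset.mem_univ _⟩
    rw [hdom] at this
    simp at this
  have hrange : Set.range F ⊆ G := by
    rintro _ ⟨i, rfl⟩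
    exact hFG i
  calc n = (Set.range F).ncard := by
        rw [← Set.image_univ, Set.ncard_image_of_injective _ hFinj, Set.ncard_univ,
          Nat.card_eq_fintype_card, Fintype.card_fin]
  _ ≤ G.ncard := Set.ncard_le_ncard hrange (Set.toFinite G)

/-- `AO_n` is generated by `x_1, …, x_n` and has rank exactly `n`. -/
theorem stmt16 {n : ℕ} (hn : 2 ≤ n) :
    (Submonoid.closure (AOgens n hn) : Set (PT n)) = AO n ∧
      ∀ G : Set (PT n), (Submonoid.closure G : Set (PT n)) = AO n → n ≤ G.ncard := by
  constructor
  · exact Set.Subset.antisymm (closure_sub_AO hn) (AO_sub_closure hn)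
  · exact fun G hG => rank_lower_bound hn G hG
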